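/- Lightness transfer: let G be a weighted graph, H its greedy t-spanner, and suppose the induced metric M_H admits a t-spanner of lightness at most l (weight at most l times w(MST(M_H))). Then the greedy spanner H itself has lightness at most l with respect to G, i.e., w(H) ≤ l·w(MST(G)). -/

import Mathlib

open SimpleGraph
open scoped ENNReal

variable {V : Type*} [Fintype V] [DecidableEq V]

/-- The simple graph determined by a finite edge set. -/
def toSG (E : Finset (Sym2 V)) : SimpleGraph V := SimpleGraph.fromEdgeSet (↑E)

/-- Weight (in `ℝ≥0∞`) of a walk, given edge weights `w`. -/
noncomputable def walkWeight (w : Sym2 V → ℝ) {G : SimpleGraph V} {u v : V}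
    (p : G.Walk u v) : ℝ≥0∞ :=
  (p.edges.map fun e => ENNReal.ofReal (w e)).sum

/-- Shortest-path distance (in `ℝ≥0∞`) between the endpoints of the pair `e`
in the graph with edge set `H` and edge weights `w`.  (`⊤` if disconnected.) -/
noncomputable def edist (H : Finset (Sym2 V)) (w : Sym2 V → ℝ) (e : Sym2 V) : ℝ≥0∞ :=
  sInf {x | ∃ (u v : V) (p : (toSG H).Walk u v), e = s(u, v) ∧ walkWeight w p = x}

/-- Total weight of an edge set. -/
noncomputable def gweight (w : Sym2 V → ℝ) (H : Finset (Sym2 V)) : ℝ := ∑ e ∈ H, w e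

/-- `H` is a `t`-spanner of the graph with edge set `E` and weights `w`. -/
def IsSpanner (w : Sym2 V → ℝ) (t : ℝ) (E H : Finset (Sym2 V)) : Prop :=
  H ⊆ E ∧ ∀ u v : V, edist H w s(u, v) ≤ ENNReal.ofReal t * edist E w s(u, v)

open Classical in
/-- One pass of the greedy algorithm over a list of candidate edges. -/
noncomputable def greedyList (w : Sym2 V → ℝ) (t : ℝ) :
    List (Sym2 V) → Finset (Sym2 V) → Finset (Sym2 V)
  | [], H => H
  | e :: l, H =>
      greedyList w t l (if ENNReal.ofReal (t * w e) < edist H w e then insert e H else H)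

/-- `H` is an output of the greedy `t`-spanner algorithm on the graph with
edge set `E` and weights `w`: the edges of `E` are processed in some
non-decreasing order of weight. -/
def IsGreedy (w : Sym2 V → ℝ) (t : ℝ) (E H : Finset (Sym2 V)) : Prop :=
  ∃ l : List (Sym2 V), l.Nodup ∧ (∀ e, e ∈ l ↔ e ∈ E) ∧
    l.Pairwise (fun a b => w a ≤ w b) ∧ greedyList w t l ∅ = H

/-- `T` is a minimum spanning tree of the graph with edge set `E` and weights `w`. -/
def IsMST (w : Sym2 V → ℝ) (E T : Finset (Sym2 V)) : Prop :=
  T ⊆ E ∧ (toSG T).IsTree ∧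
    ∀ T' ⊆ E, (toSG T').IsTree → gweight w T ≤ gweight w T'

/-- The edge set of the complete graph on `V`. -/
def completeE (V : Type*) [Fintype V] [DecidableEq V] : Finset (Sym2 V) :=
  Finset.univ.filter fun e => ¬ e.IsDiag

/-- Metric distance as a weight function on unordered pairs. -/
noncomputable def mw (V : Type*) [MetricSpace V] : Sym2 V → ℝ :=
  Sym2.lift ⟨dist, fun a b => dist_comm a b⟩

/-- The weight function of the metric space induced by the graph with
edge set `H` and weights `w` (shortest-path distances of pairs). -/
noncomputable def indw (H : Finset (Sym2 V)) (w : Sym2 V → ℝ) : Sym2 V → ℝ :=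
  fun e => (edist H w e).toReal

/-- `d` satisfies the doubling property with doubling dimension (at most) `k`:
every ball of radius `r` can be covered by at most `2 ^ k` balls of radius `r / 2`. -/
def HasDoublingDim {M : Type*} (d : M → M → ℝ) (k : ℕ) : Prop :=
  ∀ (x : M) (r : ℝ), ∃ s : Finset M, s.card ≤ 2 ^ k ∧
    ∀ y, d x y ≤ r → ∃ c ∈ s, d c y ≤ r / 2

set_option linter.unusedSectionVars false
section Aux
open SimpleGraph Walk
variable {V : Type*} [Fintype V] [DecidableEq V]
variable {X Y : Finset (Sym2 V)} {w : Sym2 V → ℝ} {u v : V}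

lemma toSG_adj : (toSG X).Adj u v ↔ s(u,v) ∈ X ∧ u ≠ v := by
  simp [toSG, SimpleGraph.fromEdgeSet_adj]

lemma toSG_mono (h : X ⊆ Y) : toSG X ≤ toSG Y := by
  intro a b hab
  rw [toSG_adj] at hab ⊢
  exact ⟨h hab.1, hab.2⟩

lemma mem_of_mem_edges {p : (toSG X).Walk u v} {e : Sym2 V} (h : e ∈ p.edges) : e ∈ X := by
  have := p.edges_subset_edgeSet h
  simp only [toSG, SimpleGraph.edgeSet_fromEdgeSet, Set.mem_diff, Finset.mem_coe] at this
  exact this.1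

lemma walkWeight_nil {u : V} : walkWeight w (Walk.nil : (toSG X).Walk u u) = 0 := rfl

lemma walkWeight_cons {G : SimpleGraph V} {x : V} (h : G.Adj u x) (p : G.Walk x v) :
    walkWeight w (Walk.cons h p) = ENNReal.ofReal (w s(u,x)) + walkWeight w p := by
  simp [walkWeight]

lemma walkWeight_append {G : SimpleGraph V} {x : V} (p : G.Walk u x) (q : G.Walk x v) :
    walkWeight w (p.append q) = walkWeight w p + walkWeight w q := by
  simp [walkWeight, Walk.edges_append]

lemma walkWeight_reverse {G : SimpleGraph V} (p : G.Walk u v) :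
    walkWeight w p.reverse = walkWeight w p := by
  simp [walkWeight, Walk.edges_reverse, List.map_reverse, List.sum_reverse]

lemma walkWeight_transfer {G G' : SimpleGraph V} (p : G.Walk u v) (hp) :
    walkWeight w (p.transfer G' hp) = walkWeight w p := by
  simp [walkWeight, Walk.edges_transfer]

lemma walkWeight_sublist_mono {G : SimpleGraph V} {p : G.Walk u v} {q : G.Walk u v}
    (hnd : q.edges.Nodup) (hsub : ∀ e ∈ q.edges, e ∈ p.edges) :
    walkWeight w q ≤ walkWeight w p := by
  have hm : (q.edges : Multiset (Sym2 V)) ≤ (p.edges : Multiset (Sym2 V)) := by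
    rw [Multiset.le_iff_count]
    intro a
    by_cases ha : a ∈ q.edges
    · have h1 : Multiset.count a (q.edges : Multiset (Sym2 V)) = 1 :=
        Multiset.count_eq_one_of_mem (by exact_mod_cast hnd) (by exact_mod_cast ha)
      have h2 : 1 ≤ Multiset.count a (p.edges : Multiset (Sym2 V)) :=
        Multiset.one_le_count_iff_mem.mpr (by exact_mod_cast hsub a ha)
      omega
    · have : Multiset.count a (q.edges : Multiset (Sym2 V)) = 0 :=
        Multiset.count_eq_zero.mpr (by exact_mod_cast ha)
      omega
  have hm2 : ((q.edges.map fun e => ENNReal.ofReal (w e) : List ℝ≥0∞) : Multiset ℝ≥0∞)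
      ≤ ((p.edges.map fun e => ENNReal.ofReal (w e) : List ℝ≥0∞) : Multiset ℝ≥0∞) := by
    rw [← Multiset.map_coe, ← Multiset.map_coe]
    exact Multiset.map_le_map hm
  obtain ⟨u', hu'⟩ := Multiset.le_iff_exists_add.mp hm2
  have : ((p.edges.map fun e => ENNReal.ofReal (w e) : List ℝ≥0∞) : Multiset ℝ≥0∞).sum
      = ((q.edges.map fun e => ENNReal.ofReal (w e) : List ℝ≥0∞) : Multiset ℝ≥0∞).sum + u'.sum := by
    rw [hu', Multiset.sum_add]
  have hle : ((q.edges.map fun e => ENNReal.ofReal (w e) : List ℝ≥0∞) : Multiset ℝ≥0∞).sum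
      ≤ ((p.edges.map fun e => ENNReal.ofReal (w e) : List ℝ≥0∞) : Multiset ℝ≥0∞).sum := by
    rw [this]; exact le_self_add
  simpa [walkWeight] using hle

lemma edist_le (p : (toSG X).Walk u v) : edist X w s(u,v) ≤ walkWeight w p :=
  sInf_le ⟨u, v, p, rfl, rfl⟩

lemma le_edist {c : ℝ≥0∞} (h : ∀ p : (toSG X).Walk u v, c ≤ walkWeight w p) :
    c ≤ edist X w s(u,v) := by
  apply le_sInf
  rintro x ⟨u', v', p, he, rfl⟩
  rw [Sym2.eq_iff] at he
  rcases he with ⟨rfl, rfl⟩ | ⟨rfl, rfl⟩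
  · exact h p
  · simpa [walkWeight_reverse] using h p.reverse

lemma edist_anti (h : X ⊆ Y) (e : Sym2 V) : edist Y w e ≤ edist X w e := by
  apply le_sInf
  rintro x ⟨u', v', p, he, rfl⟩
  have hsub : ∀ f ∈ p.edges, f ∈ (toSG Y).edgeSet := fun f hf =>
    (SimpleGraph.edgeSet_mono (toSG_mono h)) (p.edges_subset_edgeSet hf)
  calc edist Y w e ≤ walkWeight w (p.transfer (toSG Y) hsub) :=
        sInf_le ⟨u', v', _, he, rfl⟩
    _ = walkWeight w p := walkWeight_transfer p hsub

end Aux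
section Aux2
open SimpleGraph Walk
variable {V : Type*} [Fintype V] [DecidableEq V]
variable {X Y : Finset (Sym2 V)} {w : Sym2 V → ℝ} {u v : V} {e : Sym2 V}

lemma edist_le_single (he : s(u,v) ∈ X) (hne : u ≠ v) :
    _root_.edist X w s(u,v) ≤ ENNReal.ofReal (w s(u,v)) := by
  have := edist_le (w := w) (Walk.cons (toSG_adj.mpr ⟨he, hne⟩) Walk.nil)
  simpa [walkWeight_cons, walkWeight_nil] using this

lemma ofReal_le_walkWeight {G : SimpleGraph V} {p : G.Walk u v} (h : e ∈ p.edges) :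
    ENNReal.ofReal (w e) ≤ walkWeight w p :=
  List.single_le_sum (fun x _ => (zero_le : (0:ℝ≥0∞) ≤ x)) _ (List.mem_map_of_mem h)

lemma walkWeight_bypass_le (p : (toSG X).Walk u v) :
    walkWeight w p.bypass ≤ walkWeight w p :=
  walkWeight_sublist_mono (p.bypass_isPath.isTrail.edges_nodup)
    (fun _ h => p.edges_bypass_subset h)

lemma paths_finite (G : SimpleGraph V) (u v : V) :
    {q : G.Walk u v | q.IsPath}.Finite := by
  classical
  letI : DecidableRel G.Adj := Classical.decRel _
  exact Set.Finite.subset (Set.toFinite {q : G.Walk u v | q.IsPath ∧ q.length < Fintype.card V})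
    (fun q hq => ⟨hq, hq.length_lt⟩)

lemma edist_attained (hlt : _root_.edist X w e < ⊤) :
    ∃ (u v : V) (p : (toSG X).Walk u v), p.IsPath ∧ e = s(u,v) ∧
      walkWeight w p = _root_.edist X w e := by
  have hne : {x | ∃ (u v : V) (p : (toSG X).Walk u v), e = s(u, v) ∧ walkWeight w p = x}.Nonempty := by
    by_contra hcon
    rw [Set.not_nonempty_iff_eq_empty] at hcon
    unfold _root_.edist at hlt
    rw [hcon, sInf_empty] at hlt
    exact absurd hlt (lt_irrefl _)
  obtain ⟨x, u, v, p, hrep, rfl⟩ := hne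
  obtain ⟨q₀, hq₀, hmin⟩ := Set.exists_min_image {q : (toSG X).Walk u v | q.IsPath}
    (walkWeight w) (paths_finite _ u v) ⟨p.bypass, p.bypass_isPath⟩
  refine ⟨u, v, q₀, hq₀, hrep, le_antisymm ?_ ?_⟩
  · rw [hrep]
    apply le_edist
    intro p'
    calc walkWeight w q₀ ≤ walkWeight w p'.bypass := hmin _ p'.bypass_isPath
      _ ≤ walkWeight w p' := walkWeight_bypass_le p'
  · rw [hrep]; exact edist_le q₀

lemma exists_walk_weight_le {c : ℝ≥0∞} (hc : c ≠ ⊤) (hle : _root_.edist X w s(u,v) ≤ c) :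
    ∃ p : (toSG X).Walk u v, p.IsPath ∧ walkWeight w p ≤ c := by
  have hlt : _root_.edist X w s(u,v) < ⊤ := lt_of_le_of_lt hle (lt_top_iff_ne_top.mpr hc)
  obtain ⟨u', v', p, hp, hrep, hwt⟩ := edist_attained hlt
  rw [Sym2.eq_iff] at hrep
  rcases hrep with ⟨rfl, rfl⟩ | ⟨rfl, rfl⟩
  · exact ⟨p, hp, hwt ▸ hle⟩
  · exact ⟨p.reverse, hp.reverse, by rw [walkWeight_reverse]; exact hwt ▸ hle⟩

lemma reachable_of_edist_lt_top (h : _root_.edist X w s(u,v) < ⊤) : (toSG X).Reachable u v := by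
  obtain ⟨p, _, _⟩ := exists_walk_weight_le (c := _root_.edist X w s(u,v)) h.ne le_rfl
  exact ⟨p⟩

lemma walkWeight_ne_top {G : SimpleGraph V} (p : G.Walk u v) : walkWeight w p ≠ ⊤ := by
  induction p with
  | nil => simp [walkWeight]
  | cons h q ih =>
    simp only [walkWeight, Walk.edges_cons, List.map_cons, List.sum_cons]
    exact ENNReal.add_ne_top.mpr ⟨ENNReal.ofReal_ne_top, ih⟩

lemma edist_lt_top_of_reachable (h : (toSG X).Reachable u v) : _root_.edist X w s(u,v) < ⊤ := by
  obtain ⟨p⟩ := h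
  exact lt_of_le_of_lt (edist_le p) (lt_top_iff_ne_top.mpr (walkWeight_ne_top p))
end Aux2
section Aux3
open SimpleGraph Walk
variable {V : Type*} [Fintype V] [DecidableEq V]
variable {X : Finset (Sym2 V)} {w : Sym2 V → ℝ} {t : ℝ} {u v : V} {e a : Sym2 V}

lemma toSG_edgeSet : e ∈ (toSG X).edgeSet ↔ e ∈ X ∧ ¬ e.IsDiag := by
  simp [toSG, SimpleGraph.edgeSet_fromEdgeSet, Set.mem_diff]

lemma key_arith {A B : ℝ≥0∞} {we wa : ℝ} (ht : 1 ≤ t) (h0e : 0 ≤ we) (hea : we ≤ wa)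
    (h : A + B + ENNReal.ofReal wa ≤ ENNReal.ofReal (t * we)) :
    A + B + ENNReal.ofReal we ≤ ENNReal.ofReal (t * wa) := by
  have key : A + B + ENNReal.ofReal we + ENNReal.ofReal wa
      ≤ ENNReal.ofReal (t * wa) + ENNReal.ofReal wa := by
    calc A + B + ENNReal.ofReal we + ENNReal.ofReal wa
        = (A + B + ENNReal.ofReal wa) + ENNReal.ofReal we := by ring
      _ ≤ ENNReal.ofReal (t * we) + ENNReal.ofReal we := add_le_add_left h _
      _ ≤ ENNReal.ofReal (t * wa) + ENNReal.ofReal wa :=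
          add_le_add (ENNReal.ofReal_le_ofReal (by nlinarith)) (ENNReal.ofReal_le_ofReal hea)
  exact (ENNReal.add_le_add_iff_right ENNReal.ofReal_ne_top).mp key

/-- Splitting a path in `insert a X` that uses the edge `a`. -/
lemma walk_split :
    ∀ {c d : V} (p : (toSG (insert a X)).Walk c d), p.IsPath → a ∈ p.edges →
    ∃ (x' y' : V) (W₁ : (toSG X).Walk c x') (W₂ : (toSG X).Walk y' d),
      a = s(x',y') ∧
      walkWeight w W₁ + walkWeight w W₂ + ENNReal.ofReal (w a) = walkWeight w p := by
  intro c d p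
  induction p with
  | nil => intro _ h; simp at h
  | @cons c b d hadj p' ih =>
    intro hpath hmem
    by_cases hfe : s(c, b) = a
    · -- first edge is a
      subst hfe
      have hnd : s(c, b) ∉ p'.edges := by
        have := hpath.isTrail.edges_nodup
        rw [Walk.edges_cons, List.nodup_cons] at this
        exact this.1
      have hsub : ∀ f ∈ p'.edges, f ∈ (toSG X).edgeSet := by
        intro f hf
        have hf2 := p'.edges_subset_edgeSet hf
        rw [toSG_edgeSet] at hf2 ⊢
        rcases Finset.mem_insert.mp hf2.1 with h | h
        · exact absurd (h ▸ hf) hnd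
        · exact ⟨h, hf2.2⟩
      refine ⟨c, b, Walk.nil, p'.transfer _ hsub, rfl, ?_⟩
      rw [walkWeight_nil, walkWeight_transfer, walkWeight_cons]
      ring
    · -- first edge is not a
      have hmem' : a ∈ p'.edges := by
        rw [Walk.edges_cons] at hmem
        rcases List.mem_cons.mp hmem with h | h
        · exact absurd h.symm hfe
        · exact h
      obtain ⟨x', y', W₁, W₂, hrep, heq⟩ := ih hpath.of_cons hmem'
      have hadj' : (toSG X).Adj c b := by
        rw [toSG_adj]
        have := hadj
        rw [toSG_adj] at this
        refine ⟨?_, this.2⟩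
        rcases Finset.mem_insert.mp this.1 with h | h
        · exact absurd h hfe
        · exact h
      refine ⟨x', y', Walk.cons hadj' W₁, W₂, hrep, ?_⟩
      rw [walkWeight_cons, walkWeight_cons, ← heq]
      ring

end Aux3
section Aux4
open SimpleGraph Walk
variable {V : Type*} [Fintype V] [DecidableEq V]
variable {w : Sym2 V → ℝ} {t : ℝ}

lemma greedyList_cons (a : Sym2 V) (l : List (Sym2 V)) (Hc : Finset (Sym2 V)) :
    greedyList w t (a :: l) Hc =
      greedyList w t l
        (if ENNReal.ofReal (t * w a) < edist Hc w a then insert a Hc else Hc) := rfl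

lemma subset_greedyList : ∀ (l : List (Sym2 V)) (Hc : Finset (Sym2 V)),
    Hc ⊆ greedyList w t l Hc := by
  intro l
  induction l with
  | nil => intro Hc; exact fun x h => h
  | cons a l ih =>
    intro Hc
    rw [greedyList_cons]
    refine subset_trans ?_ (ih _)
    split
    · exact Finset.subset_insert _ _
    · exact subset_rfl

lemma greedyList_subset : ∀ (l : List (Sym2 V)) (Hc : Finset (Sym2 V)),
    greedyList w t l Hc ⊆ Hc ∪ l.toFinset := by
  intro l
  induction l with
  | nil => intro Hc; simp [greedyList]
  | cons a l ih =>
    intro Hc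
    rw [greedyList_cons]
    refine subset_trans (ih _) ?_
    intro x hx
    rcases Finset.mem_union.mp hx with h | h
    · split at h
      · rcases Finset.mem_insert.mp h with rfl | h
        · simp
        · exact Finset.mem_union_left _ h
      · exact Finset.mem_union_left _ h
    · simp only [List.toFinset_cons, Finset.mem_union, Finset.mem_insert]
      right; right; exact h

lemma greedy_reject : ∀ (l : List (Sym2 V)) (Hc : Finset (Sym2 V)),
    l.Pairwise (fun a b => w a ≤ w b) →
    (∀ f ∈ Hc, ∀ a ∈ l, w f ≤ w a) →
    ∀ e ∈ l, e ∉ greedyList w t l Hc →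
      edist ((greedyList w t l Hc).filter (fun f => w f ≤ w e)) w e
        ≤ ENNReal.ofReal (t * w e) := by
  intro l
  induction l with
  | nil => intro Hc _ _ e he; simp at he
  | cons a l ih =>
    intro Hc hsort hinv e he hnot
    rw [greedyList_cons] at hnot ⊢
    rcases List.mem_cons.mp he with rfl | he'
    · by_cases hcond : ENNReal.ofReal (t * w e) < edist Hc w e
      · exfalso
        rw [if_pos hcond] at hnot
        exact hnot (subset_greedyList l _ (Finset.mem_insert_self e Hc))
      · rw [if_neg hcond] at hnot ⊢
        have h1 : edist Hc w e ≤ ENNReal.ofReal (t * w e) := not_lt.mp hcond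
        refine le_trans (edist_anti ?_ e) h1
        intro f hf
        rw [Finset.mem_filter]
        exact ⟨subset_greedyList l Hc hf, hinv f hf e (List.mem_cons_self)⟩
    · refine ih _ (List.pairwise_cons.mp hsort).2 ?_ e he' hnot
      intro f hf b hb
      split at hf
      · rcases Finset.mem_insert.mp hf with rfl | hf'
        · exact (List.pairwise_cons.mp hsort).1 b hb
        · exact hinv f hf' b (List.mem_cons_of_mem _ hb)
      · exact hinv f hf b (List.mem_cons_of_mem _ hb)

lemma greedy_invariant (ht : 1 ≤ t) : ∀ (l : List (Sym2 V)) (Hc : Finset (Sym2 V)),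
    l.Nodup →
    l.Pairwise (fun a b => w a ≤ w b) →
    (∀ f ∈ Hc, ∀ a ∈ l, w f ≤ w a) →
    (∀ a ∈ l, a ∉ Hc) →
    (∀ a ∈ l, ¬ a.IsDiag) →
    (∀ a ∈ l, 0 ≤ w a) →
    (∀ f ∈ Hc, ¬ f.IsDiag) →
    (∀ f ∈ Hc, 0 ≤ w f) →
    (∀ e ∈ Hc, ENNReal.ofReal (t * w e) < edist (Hc.erase e) w e) →
    ∀ e ∈ greedyList w t l Hc,
      ENNReal.ofReal (t * w e) < edist ((greedyList w t l Hc).erase e) w e := by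
  intro l
  induction l with
  | nil => intro Hc _ _ _ _ _ _ _ _ hinv e he; exact hinv e he
  | cons a l ih =>
    intro Hc hnd hsort hwle hnotmem hdiag hpos hdiagH hposH hinv
    rw [greedyList_cons]
    by_cases hcond : ENNReal.ofReal (t * w a) < edist Hc w a
    · rw [if_pos hcond]
      have hal : a ∉ Hc := hnotmem a (List.mem_cons_self)
      refine ih (insert a Hc) (List.nodup_cons.mp hnd).2 (List.pairwise_cons.mp hsort).2 ?_ ?_
        (fun b hb => hdiag b (List.mem_cons_of_mem _ hb))
        (fun b hb => hpos b (List.mem_cons_of_mem _ hb)) ?_ ?_ ?_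
      · -- weights of new Hc below future
        intro f hf b hb
        rcases Finset.mem_insert.mp hf with rfl | hf'
        · exact (List.pairwise_cons.mp hsort).1 b hb
        · exact hwle f hf' b (List.mem_cons_of_mem _ hb)
      · -- not mem
        intro b hb
        rw [Finset.mem_insert]
        rintro (rfl | hbH)
        · exact (List.nodup_cons.mp hnd).1 hb
        · exact hnotmem b (List.mem_cons_of_mem _ hb) hbH
      · intro f hf
        rcases Finset.mem_insert.mp hf with rfl | hf'
        · exact hdiag f (List.mem_cons_self)
        · exact hdiagH f hf'
      · intro f hf
        rcases Finset.mem_insert.mp hf with rfl | hf'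
        · exact hpos f (List.mem_cons_self)
        · exact hposH f hf'
      · -- the key invariant preservation
        intro e he
        rcases Finset.mem_insert.mp he with rfl | heH
        · rwa [Finset.erase_insert hal]
        · have hea : e ≠ a := fun h => hal (h ▸ heH)
          rw [Finset.erase_insert_of_ne hea.symm]
          by_contra hcon
          push_neg at hcon
          -- hcon : edist (insert a (Hc.erase e)) w e ≤ ofReal (t * w e)
          obtain ⟨u, v, rfl⟩ : ∃ u v, e = s(u,v) := by
            induction e using Sym2.ind with | _ x y => exact ⟨x, y, rfl⟩
          obtain ⟨p, hp, hwt⟩ := exists_walk_weight_le ENNReal.ofReal_ne_top hcon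
          by_cases hap : a ∈ p.edges
          · -- use walk_split and reroute through e
            obtain ⟨x', y', W₁, W₂, hrep, heq⟩ := walk_split p hp hap
            have huv : u ≠ v := by
              intro h
              exact hdiagH _ heH (by rw [h]; exact Sym2.mk_isDiag_iff.mpr rfl)
            have hadj : (toSG Hc).Adj u v := toSG_adj.mpr ⟨heH, huv⟩
            have hsubW : Hc.erase s(u,v) ⊆ Hc := Finset.erase_subset _ _
            have hW₁ : ∀ f ∈ W₁.edges, f ∈ (toSG Hc).edgeSet := fun f hf =>
              (SimpleGraph.edgeSet_mono (toSG_mono hsubW)) (W₁.edges_subset_edgeSet hf)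
            have hW₂ : ∀ f ∈ W₂.reverse.edges, f ∈ (toSG Hc).edgeSet := fun f hf =>
              (SimpleGraph.edgeSet_mono (toSG_mono hsubW)) (W₂.reverse.edges_subset_edgeSet hf)
            set Q : (toSG Hc).Walk x' y' :=
              (W₁.transfer _ hW₁).reverse.append (Walk.cons hadj (W₂.reverse.transfer _ hW₂))
            have hQw : walkWeight w Q =
                walkWeight w W₁ + walkWeight w W₂ + ENNReal.ofReal (w s(u,v)) := by
              rw [walkWeight_append, walkWeight_reverse, walkWeight_transfer, walkWeight_cons,
                walkWeight_transfer, walkWeight_reverse]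
              ring
            have hbound : walkWeight w Q ≤ ENNReal.ofReal (t * w a) := by
              rw [hQw]
              refine key_arith ht (hposH _ heH) (hwle _ heH a (List.mem_cons_self)) ?_
              rw [heq]; exact hwt
            have h5 : edist Hc w a ≤ walkWeight w Q := by
              rw [hrep]; exact edist_le Q
            exact absurd (le_trans h5 hbound) (not_le.mpr hcond)
          · -- transfer to Hc.erase e; contradict old invariant
            have hsub : ∀ f ∈ p.edges, f ∈ (toSG (Hc.erase s(u,v))).edgeSet := by
              intro f hf
              have hf2 := p.edges_subset_edgeSet hf
              rw [toSG_edgeSet] at hf2 ⊢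
              refine ⟨?_, hf2.2⟩
              rcases Finset.mem_insert.mp hf2.1 with rfl | h
              · exact absurd hf hap
              · exact h
            have := edist_le (w := w) (p.transfer _ hsub)
            rw [walkWeight_transfer] at this
            exact absurd (le_trans this hwt) (not_le.mpr (hinv _ heH))
    · rw [if_neg hcond]
      refine ih Hc (List.nodup_cons.mp hnd).2 (List.pairwise_cons.mp hsort).2
        (fun f hf b hb => hwle f hf b (List.mem_cons_of_mem _ hb))
        (fun b hb => hnotmem b (List.mem_cons_of_mem _ hb))
        (fun b hb => hdiag b (List.mem_cons_of_mem _ hb))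
        (fun b hb => hpos b (List.mem_cons_of_mem _ hb))
        hdiagH hposH hinv

end Aux4
section Aux5
open SimpleGraph Walk
variable {V : Type*} [Fintype V] [DecidableEq V]
variable {w : Sym2 V → ℝ} {u v : V}

lemma reachable_hered {G G' : SimpleGraph V} (h : ∀ x y, G.Adj x y → G'.Reachable x y)
    {u v : V} (hr : G.Reachable u v) : G'.Reachable u v := by
  obtain ⟨p⟩ := hr
  induction p with
  | nil => exact Reachable.refl _
  | cons hadj _ ih => exact (h _ _ hadj).trans ih

lemma exists_crossing_adj {G : SimpleGraph V} {R : Set V} {c d : V} (p : G.Walk c d)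
    (hc : c ∈ R) (hd : d ∉ R) : ∃ a b, G.Adj a b ∧ a ∈ R ∧ b ∉ R := by
  induction p with
  | nil => exact absurd hc hd
  | @cons c b d hadj p ih =>
    by_cases hb : b ∈ R
    · exact ih hb hd
    · exact ⟨c, b, hadj, hc, hb⟩

lemma transfer_of_not_mem {K : Finset (Sym2 V)} {e : Sym2 V} {x y : V}
    (p : (toSG K).Walk x y) (hne : e ∉ p.edges) :
    ∀ f ∈ p.edges, f ∈ (toSG (K.erase e)).edgeSet := by
  intro f hf
  have hf2 := p.edges_subset_edgeSet hf
  rw [toSG_edgeSet] at hf2 ⊢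
  exact ⟨Finset.mem_erase.mpr ⟨fun h => hne (h ▸ hf), hf2.1⟩, hf2.2⟩

lemma reach_u_or_v {K : Finset (Sym2 V)} {u v : V} (hne : u ≠ v)
    (hpre : (toSG K).Preconnected) (x : V) :
    (toSG (K.erase s(u,v))).Reachable u x ∨ (toSG (K.erase s(u,v))).Reachable v x := by
  obtain ⟨p0⟩ := hpre u x
  have hp : p0.bypass.IsPath := p0.bypass_isPath
  set p := p0.bypass with hpdef
  by_cases he : s(u,v) ∈ p.edges
  · right
    have hv : v ∈ p.support := p.snd_mem_support_of_mem_edges he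
    set r := p.dropUntil v hv with hrdef
    have hnotin : s(u,v) ∉ r.edges := by
      intro hmem
      have hu : u ∈ r.support := r.fst_mem_support_of_mem_edges hmem
      have hnd : p.support.Nodup := hp.support_nodup
      have hspec := p.take_spec hv
      rw [← hspec, Walk.support_append] at hnd
      have hdisj := (List.nodup_append.mp hnd).2.2
      have hu1 : u ∈ (p.takeUntil v hv).support := Walk.start_mem_support _
      have hu2 : u ∈ ((p.dropUntil v hv).support).tail := by
        have hcons := Walk.support_eq_cons (p.dropUntil v hv)
        rw [hrdef] at hu
        rw [hcons] at hu
        rcases List.mem_cons.mp hu with h | h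
        · exact absurd h hne
        · exact h
      exact hdisj u hu1 u hu2 rfl
    exact ⟨r.transfer _ (transfer_of_not_mem r hnotin)⟩
  · left
    exact ⟨p.transfer _ (transfer_of_not_mem p he)⟩
end Aux5
section Aux6
open SimpleGraph Walk
variable {V : Type*} [Fintype V] [DecidableEq V]
variable {w : Sym2 V → ℝ} {t : ℝ} {u v : V}

lemma toSG_erase_eq (K : Finset (Sym2 V)) (e : Sym2 V) :
    toSG (K.erase e) = toSG K \ SimpleGraph.fromEdgeSet {e} := by
  ext a b
  simp only [toSG, SimpleGraph.fromEdgeSet_adj, SimpleGraph.sdiff_adj, Finset.coe_erase,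
    Set.mem_diff, Set.mem_singleton_iff, Finset.mem_coe]
  tauto

lemma connected_erase_of_reachable {K : Finset (Sym2 V)} {u v : V} (hconn : (toSG K).Connected)
    (hr : (toSG (K.erase s(u,v))).Reachable u v) : (toSG (K.erase s(u,v))).Connected := by
  have hpre : (toSG (K.erase s(u,v))).Preconnected := by
    intro x y
    refine reachable_hered ?_ (hconn.preconnected x y)
    intro c d hadj
    by_cases hcd : s(c,d) = s(u,v)
    · rw [Sym2.eq_iff] at hcd
      rcases hcd with ⟨rfl, rfl⟩ | ⟨rfl, rfl⟩
      · exact hr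
      · exact hr.symm
    · rw [toSG_adj] at hadj
      exact SimpleGraph.Adj.reachable
        (toSG_adj.mpr ⟨Finset.mem_erase.mpr ⟨hcd, hadj.1⟩, hadj.2⟩)
  haveI := hconn.nonempty
  exact ⟨hpre⟩

lemma toSG_acyclic_of_empty : (toSG (∅ : Finset (Sym2 V))).IsAcyclic := by
  intro v c hcyc
  have h3 := hcyc.three_le_length
  have : c.edges ≠ [] := by
    intro h
    have := c.length_edges
    rw [h] at this
    simp at this
    omega
  obtain ⟨e, he⟩ := List.exists_mem_of_ne_nil _ this
  have := c.edges_subset_edgeSet he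
  rw [toSG_edgeSet] at this
  simp at this

lemma exists_tree_subset : ∀ (n : ℕ) (K : Finset (Sym2 V)), K.card ≤ n →
    (toSG K).Connected → ∃ T ⊆ K, (toSG T).IsTree := by
  intro n
  induction n with
  | zero =>
    intro K hc hconn
    have hK : K = ∅ := Finset.card_eq_zero.mp (Nat.le_zero.mp hc)
    subst hK
    exact ⟨∅, subset_rfl, ⟨hconn, toSG_acyclic_of_empty⟩⟩
  | succ n ih =>
    intro K hc hconn
    by_cases hac : (toSG K).IsAcyclic
    · exact ⟨K, subset_rfl, ⟨hconn, hac⟩⟩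
    · rw [SimpleGraph.IsAcyclic] at hac
      push_neg at hac
      obtain ⟨v, c, hcyc⟩ := hac
      have h3 := hcyc.three_le_length
      have hne : c.edges ≠ [] := by
        intro h
        have := c.length_edges
        rw [h] at this
        simp at this
        omega
      obtain ⟨e, he⟩ := List.exists_mem_of_ne_nil _ hne
      obtain ⟨x, y, rfl⟩ : ∃ x y, e = s(x,y) := by
        induction e using Sym2.ind with | _ x y => exact ⟨x, y, rfl⟩
      have hadj : (toSG K).Adj x y := (toSG K).mem_edgeSet.mp (c.edges_subset_edgeSet he)
      have hreach : (toSG K \ SimpleGraph.fromEdgeSet {s(x,y)}).Reachable x y :=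
        (SimpleGraph.adj_and_reachable_delete_edges_iff_exists_cycle.mpr ⟨v, c, hcyc, he⟩).2
      rw [← toSG_erase_eq] at hreach
      have hconn' := connected_erase_of_reachable hconn hreach
      have hmem : s(x,y) ∈ K := (toSG_adj.mp hadj).1
      have hcard : (K.erase s(x,y)).card ≤ n := by
        have := Finset.card_erase_of_mem hmem
        omega
      obtain ⟨T, hT, htree⟩ := ih _ hcard hconn'
      exact ⟨T, subset_trans hT (Finset.erase_subset _ _), htree⟩

lemma gweight_nonneg {X : Finset (Sym2 V)} (h : ∀ f ∈ X, 0 ≤ w f) : 0 ≤ gweight w X :=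
  Finset.sum_nonneg h

lemma gweight_mono {X Y : Finset (Sym2 V)} (h : X ⊆ Y) (hw : ∀ f ∈ Y, 0 ≤ w f) :
    gweight w X ≤ gweight w Y :=
  Finset.sum_le_sum_of_subset_of_nonneg h (fun f hf _ => hw f hf)

lemma exchange {E H : Finset (Sym2 V)} (hw : ∀ e ∈ E, 0 < w e) (hEnd : ∀ e ∈ E, ¬e.IsDiag)
    (hHE : H ⊆ E)
    (hrej : ∀ e ∈ E, e ∉ H →
      edist (H.filter (fun f => w f ≤ w e)) w e ≤ ENNReal.ofReal (t * w e)) :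
    ∀ (n : ℕ) (K : Finset (Sym2 V)), (K \ H).card ≤ n → K ⊆ E → (toSG K).Connected →
      ∃ K' ⊆ H, (toSG K').Connected ∧ gweight w K' ≤ gweight w K := by
  intro n
  induction n with
  | zero =>
    intro K hcard hKE hconn
    have : K \ H = ∅ := Finset.card_eq_zero.mp (Nat.le_zero.mp hcard)
    have hKH : K ⊆ H := by
      intro x hx
      by_contra hxH
      have : x ∈ K \ H := Finset.mem_sdiff.mpr ⟨hx, hxH⟩
      rw [‹K \ H = ∅›] at this
      simp at this
    exact ⟨K, hKH, hconn, le_refl _⟩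
  | succ n ih =>
    intro K hcard hKE hconn
    by_cases hKH : K ⊆ H
    · exact ⟨K, hKH, hconn, le_refl _⟩
    · have hne : (K \ H).Nonempty := by
        rw [Finset.sdiff_nonempty]; exact hKH
      obtain ⟨e, heKH⟩ := hne
      have heK : e ∈ K := (Finset.mem_sdiff.mp heKH).1
      have heH : e ∉ H := (Finset.mem_sdiff.mp heKH).2
      obtain ⟨u, v, rfl⟩ : ∃ x y, e = s(x,y) := by
        induction e using Sym2.ind with | _ x y => exact ⟨x, y, rfl⟩
      have huv : u ≠ v := by
        intro h
        exact hEnd _ (hKE heK) (by rw [h]; exact Sym2.mk_isDiag_iff.mpr rfl)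
      have hbound := hrej _ (hKE heK) heH
      obtain ⟨Wp, _, hWw⟩ := exists_walk_weight_le ENNReal.ofReal_ne_top hbound
      by_cases hreach : (toSG (K.erase s(u,v))).Reachable u v
      · have hconn' := connected_erase_of_reachable hconn hreach
        have hcard' : ((K.erase s(u,v)) \ H).card ≤ n := by
          have h1 : (K.erase s(u,v)) \ H = (K \ H).erase s(u,v) := by
            ext x; simp only [Finset.mem_sdiff, Finset.mem_erase]; tauto
          rw [h1]
          have := Finset.card_erase_of_mem heKH
          omega
        obtain ⟨K', hK'H, hK'conn, hK'w⟩ := ih _ hcard'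
          (subset_trans (Finset.erase_subset _ _) hKE) hconn'
        refine ⟨K', hK'H, hK'conn, le_trans hK'w ?_⟩
        exact gweight_mono (Finset.erase_subset _ _) (fun f hf => le_of_lt (hw f (hKE hf)))
      · -- exchange across the cut
        set R : Set V := {x | (toSG (K.erase s(u,v))).Reachable u x} with hR
        have huR : u ∈ R := Reachable.refl _
        have hvR : v ∉ R := hreach
        obtain ⟨a, b, habadj, haR, hbR⟩ := exists_crossing_adj Wp huR hvR
        have hfH : s(a,b) ∈ H.filter (fun f => w f ≤ w s(u,v)) := (toSG_adj.mp habadj).1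
        have hab : a ≠ b := (toSG_adj.mp habadj).2
        have hfH' : s(a,b) ∈ H := (Finset.mem_filter.mp hfH).1
        have hfwle : w s(a,b) ≤ w s(u,v) := (Finset.mem_filter.mp hfH).2
        have hfK : s(a,b) ∉ K.erase s(u,v) := by
          intro hmem
          exact hbR (haR.trans (SimpleGraph.Adj.reachable (toSG_adj.mpr ⟨hmem, hab⟩)))
        set K' := insert s(a,b) (K.erase s(u,v)) with hK'
        have hsub : K.erase s(u,v) ⊆ K' := Finset.subset_insert _ _
        have hreach2 : ∀ x, (toSG K').Reachable u x := by
          intro x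
          have habr : (toSG K').Reachable a b :=
            SimpleGraph.Adj.reachable (toSG_adj.mpr ⟨Finset.mem_insert_self _ _, hab⟩)
          have hua : (toSG K').Reachable u a := (haR.mono (toSG_mono hsub))
          have hvb : (toSG K').Reachable v b := by
            rcases reach_u_or_v huv hconn.preconnected b with h | h
            · exact absurd h hbR
            · exact h.mono (toSG_mono hsub)
          rcases reach_u_or_v huv hconn.preconnected x with h | h
          · exact h.mono (toSG_mono hsub)
          · exact (hua.trans habr).trans ((hvb.symm.trans (h.mono (toSG_mono hsub))))
        have hconn' : (toSG K').Connected := by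
          have : Nonempty V := hconn.nonempty
          exact ⟨fun x y => (hreach2 x).symm.trans (hreach2 y)⟩
        have hcard' : (K' \ H).card ≤ n := by
          have h1 : K' \ H = (K \ H).erase s(u,v) := by
            ext x
            simp only [hK', Finset.mem_sdiff, Finset.mem_erase, Finset.mem_insert]
            constructor
            · rintro ⟨rfl | ⟨hx1, hx2⟩, hxH⟩
              · exact absurd hfH' hxH
              · exact ⟨hx1, hx2, hxH⟩
            · rintro ⟨hx1, hx2, hxH⟩
              exact ⟨Or.inr ⟨hx1, hx2⟩, hxH⟩
          rw [h1]
          have := Finset.card_erase_of_mem heKH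
          omega
        have hwK' : gweight w K' ≤ gweight w K := by
          rw [hK', gweight, Finset.sum_insert hfK, ← gweight,
            gweight, Finset.sum_erase_eq_sub heK, ← gweight]
          linarith
        obtain ⟨K'', hK''H, hK''conn, hK''w⟩ := ih _ hcard'
          (by
            intro x hx
            rcases Finset.mem_insert.mp hx with rfl | hx'
            · exact hHE hfH'
            · exact hKE (Finset.erase_subset _ _ hx')) hconn'
        exact ⟨K'', hK''H, hK''conn, le_trans hK''w hwK'⟩

end Aux6
section Aux7
open SimpleGraph Walk
variable {V : Type*} [Fintype V] [DecidableEq V]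
variable {w : Sym2 V → ℝ} {t : ℝ} {u v : V} {X H : Finset (Sym2 V)}

lemma edist_pos' (hpos : ∀ f ∈ X, 0 < w f) {c d : V} (hcd : c ≠ d) :
    0 < edist X w s(c,d) := by
  rw [pos_iff_ne_zero]
  intro h0
  have hlt : edist X w s(c,d) < ⊤ := by rw [h0]; exact ENNReal.zero_lt_top
  obtain ⟨c', d', p, hp, hrep, hwt⟩ := edist_attained hlt
  rw [h0] at hwt
  cases p with
  | nil =>
    rw [Sym2.eq_iff] at hrep
    rcases hrep with ⟨rfl, rfl⟩ | ⟨rfl, rfl⟩ <;> exact hcd rfl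
  | cons hadj q =>
    rw [walkWeight_cons] at hwt
    have h1 := (add_eq_zero.mp hwt).1
    rw [ENNReal.ofReal_eq_zero] at h1
    have := hpos _ (toSG_adj.mp hadj).1
    linarith

lemma toReal_walkWeight {G : SimpleGraph V} (p : G.Walk u v)
    (hpos : ∀ f ∈ p.edges, 0 ≤ w f) :
    (walkWeight w p).toReal = (p.edges.map w).sum := by
  induction p with
  | nil => simp [walkWeight]
  | cons hadj q ih =>
    rw [walkWeight_cons, ENNReal.toReal_add ENNReal.ofReal_ne_top (walkWeight_ne_top q),
      ENNReal.toReal_ofReal (hpos _ (by simp)), Walk.edges_cons, List.map_cons, List.sum_cons,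
      ih (fun f hf => hpos f (by simp [hf]))]

lemma gweight_union_le {X Y : Finset (Sym2 V)} (hX : ∀ f ∈ X, 0 ≤ w f)
    (hY : ∀ f ∈ Y, 0 ≤ w f) : gweight w (X ∪ Y) ≤ gweight w X + gweight w Y := by
  have h1 : X ∪ Y = X ∪ (Y \ X) := by rw [Finset.union_sdiff_self_eq_union]
  rw [gweight, h1, Finset.sum_union (Finset.disjoint_sdiff)]
  have : ∑ e ∈ Y \ X, w e ≤ ∑ e ∈ Y, w e :=
    Finset.sum_le_sum_of_subset_of_nonneg (Finset.sdiff_subset) (fun f hf _ => hY f hf)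
  unfold gweight
  linarith

lemma gweight_biUnion_le {α : Type*} [DecidableEq α] {s : Finset α} {f : α → Finset (Sym2 V)}
    (h : ∀ a ∈ s, ∀ x ∈ f a, 0 ≤ w x) :
    gweight w (s.biUnion f) ≤ ∑ a ∈ s, gweight w (f a) := by
  induction s using Finset.induction with
  | empty => simp [gweight]
  | @insert a s ha ih =>
    rw [Finset.biUnion_insert, Finset.sum_insert ha]
    refine le_trans (gweight_union_le (h a (Finset.mem_insert_self _ _)) ?_) ?_
    · intro x hx
      obtain ⟨b, hb, hxb⟩ := Finset.mem_biUnion.mp hx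
      exact h b (Finset.mem_insert_of_mem hb) x hxb
    · exact add_le_add_right (ih (fun b hb x hx => h b (Finset.mem_insert_of_mem hb) x hx)) _

lemma edist_eq_of_mem (ht : 1 ≤ t) (hpos : ∀ f ∈ H, 0 < w f) (hnd : ∀ f ∈ H, ¬f.IsDiag)
    (hinv : ∀ e ∈ H, ENNReal.ofReal (t * w e) < edist (H.erase e) w e) :
    ∀ e ∈ H, edist H w e = ENNReal.ofReal (w e) := by
  intro e he
  obtain ⟨u, v, rfl⟩ : ∃ x y, e = s(x,y) := by
    induction e using Sym2.ind with | _ x y => exact ⟨x, y, rfl⟩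
  have huv : u ≠ v := fun h => hnd _ he (by rw [h]; exact Sym2.mk_isDiag_iff.mpr rfl)
  refine le_antisymm (edist_le_single he huv) (le_edist ?_)
  intro p
  by_cases hep : s(u,v) ∈ p.edges
  · exact ofReal_le_walkWeight hep
  · have htr := edist_le (w := w) (p.transfer _ (transfer_of_not_mem p hep))
    rw [walkWeight_transfer] at htr
    have h2 := hinv _ he
    have h3 : ENNReal.ofReal (w s(u,v)) ≤ ENNReal.ofReal (t * w s(u,v)) :=
      ENNReal.ofReal_le_ofReal (by nlinarith [hpos _ he])
    exact le_trans h3 (le_trans (le_of_lt h2) htr)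

end Aux7
section Aux8
open SimpleGraph Walk
variable {V : Type*} [Fintype V] [DecidableEq V]

lemma walkWeight_copy {w : Sym2 V → ℝ} {G : SimpleGraph V} {u v u' v' : V} (p : G.Walk u v)
    (hu : u = u') (hv : v = v') :
    walkWeight w (p.copy hu hv) = walkWeight w p := by
  subst hu; subst hv; rfl

lemma pullback {S H : Finset (Sym2 V)} {w : Sym2 V → ℝ} {t : ℝ} (ht : 1 ≤ t)
    (hpos : ∀ f ∈ H, 0 < w f) (hnd : ∀ f ∈ H, ¬f.IsDiag)
    (hHconn : (toSG H).Connected)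
    (hinv : ∀ e ∈ H, ENNReal.ofReal (t * w e) < edist (H.erase e) w e)
    (hspan : ∀ u v : V, edist S (indw H w) s(u, v) ≤ ENNReal.ofReal t * edist H w s(u, v)) :
    gweight w H ≤ gweight (indw H w) S := by
  classical
  have hrep : ∀ e : Sym2 V, ∃ x y, e = s(x,y) := fun e => by
    induction e using Sym2.ind with | _ x y => exact ⟨x, y, rfl⟩
  have hfin : ∀ (x y : V), edist H w s(x,y) < ⊤ := fun x y =>
    edist_lt_top_of_reachable (hHconn.preconnected x y)
  have hdata : ∀ e : Sym2 V, ∃ (x y : V) (q : (toSG H).Walk x y), q.IsPath ∧ e = s(x,y) ∧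
      walkWeight w q = edist H w e := by
    intro e
    obtain ⟨x, y, rfl⟩ := hrep e
    exact edist_attained (hfin x y)
  choose qx qy q hq hqrep hqw using hdata
  set H' : Finset (Sym2 V) := S.biUnion (fun e => (q e).edges.toFinset) with hH'def
  have hH'H : H' ⊆ H := by
    intro f hf
    obtain ⟨e, heS, hfe⟩ := Finset.mem_biUnion.mp hf
    exact mem_of_mem_edges (List.mem_toFinset.mp hfe)
  have hwalkS : ∀ {c d : V} (qS : (toSG S).Walk c d),
      ∃ r : (toSG H').Walk c d, walkWeight w r ≤ walkWeight (indw H w) qS := by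
    intro c d qS
    induction qS with
    | nil => exact ⟨Walk.nil, by simp [walkWeight]⟩
    | @cons c b d hadj qS' ih =>
      obtain ⟨r', hr'⟩ := ih
      have hfS : s(c,b) ∈ S := (toSG_adj.mp hadj).1
      have hsubq : ∀ g ∈ (q s(c,b)).edges, g ∈ (toSG H').edgeSet := by
        intro g hg
        rw [toSG_edgeSet]
        have hgH := (q s(c,b)).edges_subset_edgeSet hg
        rw [toSG_edgeSet] at hgH
        exact ⟨Finset.mem_biUnion.mpr ⟨s(c,b), hfS, List.mem_toFinset.mpr hg⟩, hgH.2⟩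
      have hor : ∃ rq : (toSG H').Walk c b, walkWeight w rq = edist H w s(c,b) := by
        have h1 := hqrep s(c,b)
        rw [Sym2.eq_iff] at h1
        rcases h1 with ⟨h1, h2⟩ | ⟨h1, h2⟩
        · refine ⟨((q s(c,b)).transfer _ hsubq).copy h1.symm h2.symm, ?_⟩
          rw [walkWeight_copy, walkWeight_transfer]
          exact hqw s(c,b)
        · refine ⟨((q s(c,b)).transfer _ hsubq).reverse.copy h1.symm h2.symm, ?_⟩
          rw [walkWeight_copy, walkWeight_reverse, walkWeight_transfer]
          exact hqw s(c,b)
      obtain ⟨rq, hrq⟩ := hor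
      refine ⟨rq.append r', ?_⟩
      have hofr : ENNReal.ofReal (indw H w s(c,b)) = edist H w s(c,b) :=
        ENNReal.ofReal_toReal (hfin c b).ne
      calc walkWeight w (rq.append r') = walkWeight w rq + walkWeight w r' :=
            walkWeight_append _ _
        _ ≤ edist H w s(c,b) + walkWeight (indw H w) qS' := add_le_add (le_of_eq hrq) hr'
        _ = walkWeight (indw H w) (Walk.cons hadj qS') := by
            rw [walkWeight_cons, hofr]
  have hspanH' : ∀ x y : V, edist H' w s(x,y) ≤ edist S (indw H w) s(x,y) := by
    intro x y
    apply le_sInf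
    rintro z ⟨x', y', qS, hrep2, rfl⟩
    obtain ⟨r, hr⟩ := hwalkS qS
    calc edist H' w s(x,y) = edist H' w s(x',y') := by rw [hrep2]
      _ ≤ walkWeight w r := edist_le r
      _ ≤ walkWeight (indw H w) qS := hr
  have hH'eq : H' = H := by
    refine Finset.Subset.antisymm hH'H (fun e heH => ?_)
    by_contra heH'
    obtain ⟨x, y, hexy⟩ := hrep e
    subst hexy
    have h1 : edist H' w s(x,y) ≤ ENNReal.ofReal t * edist H w s(x,y) :=
      le_trans (hspanH' x y) (hspan x y)
    rw [edist_eq_of_mem ht hpos hnd hinv _ heH,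
      ← ENNReal.ofReal_mul (le_trans zero_le_one ht)] at h1
    have h2 : H' ⊆ H.erase s(x,y) := fun g hg =>
      Finset.mem_erase.mpr ⟨fun hge => heH' (hge ▸ hg), hH'H hg⟩
    have h3 := le_trans (edist_anti h2 s(x,y)) h1
    exact absurd h3 (not_le.mpr (hinv _ heH))
  calc gweight w H = gweight w H' := by rw [hH'eq]
    _ ≤ ∑ e ∈ S, gweight w ((q e).edges.toFinset) := by
        rw [hH'def]
        refine gweight_biUnion_le ?_
        intro e heS g hg
        exact le_of_lt (hpos _ (mem_of_mem_edges (List.mem_toFinset.mp hg)))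
    _ ≤ gweight (indw H w) S := by
        rw [gweight]
        refine Finset.sum_le_sum ?_
        intro e heS
        have hnd2 : (q e).edges.Nodup := (hq e).isTrail.edges_nodup
        rw [gweight, List.sum_toFinset _ hnd2,
          ← toReal_walkWeight _ (fun f hf => le_of_lt (hpos _ (mem_of_mem_edges hf))), hqw]
        exact le_refl _
end Aux8
theorem lightness_transfer' {V : Type*} [Fintype V] [DecidableEq V]
    (E H : Finset (Sym2 V)) (w : Sym2 V → ℝ) (t l : ℝ)
    (ht : 1 ≤ t) (hw : ∀ e ∈ E, 0 < w e) (hE : E ⊆ completeE V)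
    (hconn : (toSG E).Connected) (hH : IsGreedy w t E H)
    (hspan : ∃ S : Finset (Sym2 V), S ⊆ completeE V ∧
      (∀ u v : V, edist S (indw H w) s(u, v) ≤
        ENNReal.ofReal t * edist H w s(u, v)) ∧
      ∀ ZM, IsMST (indw H w) (completeE V) ZM →
        gweight (indw H w) S ≤ l * gweight (indw H w) ZM) :
    ∀ Z, IsMST w E Z → gweight w H ≤ l * gweight w Z := by
  classical
  intro Z hZ
  obtain ⟨S, hScomp, hSspan, hSmst⟩ := hspan
  obtain ⟨L, hLnd, hLmem, hLsort, hLgreedy⟩ := hH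
  have hLto : L.toFinset = E := by ext e; rw [List.mem_toFinset, hLmem]
  have hHE : H ⊆ E := by
    rw [← hLgreedy]
    refine subset_trans (greedyList_subset L ∅) ?_
    rw [hLto]
    simp
  have hEnd : ∀ e ∈ E, ¬ e.IsDiag := fun e he => (Finset.mem_filter.mp (hE he)).2
  have hHnd : ∀ f ∈ H, ¬ f.IsDiag := fun f hf => hEnd f (hHE hf)
  have hHpos : ∀ f ∈ H, 0 < w f := fun f hf => hw f (hHE hf)
  have hinv : ∀ e ∈ H, ENNReal.ofReal (t * w e) < edist (H.erase e) w e := by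
    rw [← hLgreedy]
    exact greedy_invariant ht L ∅ hLnd hLsort (by simp) (by simp)
      (fun a ha => hEnd a ((hLmem a).mp ha))
      (fun a ha => le_of_lt (hw a ((hLmem a).mp ha)))
      (by simp) (by simp) (by simp)
  have hrej : ∀ e ∈ E, e ∉ H →
      edist (H.filter (fun f => w f ≤ w e)) w e ≤ ENNReal.ofReal (t * w e) := by
    intro e heE heH
    rw [← hLgreedy] at heH ⊢
    exact greedy_reject L ∅ hLsort (by simp) e ((hLmem e).mpr heE) heH
  have hHconn : (toSG H).Connected := by
    haveI := hconn.nonempty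
    refine ⟨fun x y => ?_⟩
    refine reachable_hered ?_ (hconn.preconnected x y)
    intro c d hadj
    rw [toSG_adj] at hadj
    by_cases hcd : s(c,d) ∈ H
    · exact (toSG_adj.mpr ⟨hcd, hadj.2⟩).reachable
    · have hb := hrej _ hadj.1 hcd
      have hfin : edist (H.filter (fun f => w f ≤ w s(c,d))) w s(c,d) < ⊤ :=
        lt_of_le_of_lt hb ENNReal.ofReal_lt_top
      exact (reachable_of_edist_lt_top hfin).mono (toSG_mono (Finset.filter_subset _ _))
  have hindw : ∀ e ∈ H, indw H w e = w e := by
    intro e he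
    have := edist_eq_of_mem ht hHpos hHnd hinv e he
    show (edist H w e).toReal = w e
    rw [this, ENNReal.toReal_ofReal (le_of_lt (hHpos e he))]
  have h1 : gweight w H ≤ gweight (indw H w) S := pullback ht hHpos hHnd hHconn hinv hSspan
  by_cases htriv : ∀ x y : V, x = y
  · have hEempty : E = ∅ := by
      rw [Finset.eq_empty_iff_forall_notMem]
      intro e he
      obtain ⟨x, y, rfl⟩ : ∃ x y, e = s(x,y) := by
        induction e using Sym2.ind with | _ x y => exact ⟨x, y, rfl⟩
      exact hEnd _ he (by rw [htriv x y]; exact Sym2.mk_isDiag_iff.mpr rfl)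
    have hH0 : H = ∅ := Finset.subset_empty.mp (hEempty ▸ hHE)
    have hZ0 : Z = ∅ := Finset.subset_empty.mp (hEempty ▸ hZ.1)
    rw [hH0, hZ0]
    simp [gweight]
  · obtain ⟨x₀, y₀, hx₀y₀⟩ : ∃ x y : V, x ≠ y := by push_neg at htriv; exact htriv
    have hZcomp : Z ⊆ completeE V := subset_trans hZ.1 hE
    set 𝒯 := (completeE V).powerset.filter (fun T => (toSG T).IsTree) with h𝒯
    have hZ𝒯 : Z ∈ 𝒯 := Finset.mem_filter.mpr ⟨Finset.mem_powerset.mpr hZcomp, hZ.2.1⟩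
    obtain ⟨ZM, hZM𝒯, hZMmin⟩ := Finset.exists_min_image 𝒯 (gweight (indw H w)) ⟨Z, hZ𝒯⟩
    have hZMsub : ZM ⊆ completeE V := Finset.mem_powerset.mp (Finset.mem_filter.mp hZM𝒯).1
    have hZMtree : (toSG ZM).IsTree := (Finset.mem_filter.mp hZM𝒯).2
    have hZMmst : IsMST (indw H w) (completeE V) ZM := by
      refine ⟨hZMsub, hZMtree, ?_⟩
      intro T' hT' htree'
      exact hZMmin T' (Finset.mem_filter.mpr ⟨Finset.mem_powerset.mpr hT', htree'⟩)
    have h2 := hSmst ZM hZMmst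
    have h3 : gweight (indw H w) ZM ≤ gweight w Z := by
      obtain ⟨K', hK'H, hK'conn, hK'w⟩ := exchange hw hEnd hHE hrej (Z \ H).card Z le_rfl hZ.1
        hZ.2.1.isConnected
      obtain ⟨T'', hT''K', hT''tree⟩ := exists_tree_subset K'.card K' le_rfl hK'conn
      have hT''H : T'' ⊆ H := subset_trans hT''K' hK'H
      have hT''comp : T'' ⊆ completeE V := subset_trans hT''H (subset_trans hHE hE)
      have e1 : gweight (indw H w) ZM ≤ gweight (indw H w) T'' :=
        hZMmin T'' (Finset.mem_filter.mpr ⟨Finset.mem_powerset.mpr hT''comp, hT''tree⟩)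
      have e2 : gweight (indw H w) T'' = gweight w T'' :=
        Finset.sum_congr rfl (fun f hf => hindw f (hT''H hf))
      have e3 : gweight w T'' ≤ gweight w K' :=
        gweight_mono hT''K' (fun f hf => le_of_lt (hHpos f (hK'H hf)))
      linarith
    have hSnn : 0 ≤ gweight (indw H w) S :=
      gweight_nonneg (fun f _ => ENNReal.toReal_nonneg)
    have hZMpos : 0 < gweight (indw H w) ZM := by
      obtain ⟨p⟩ := hZMtree.isConnected.preconnected x₀ y₀
      have hpne : p.edges ≠ [] := by
        intro hnil
        refine hx₀y₀ (SimpleGraph.Walk.eq_of_length_eq_zero (p := p) ?_)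
        rw [← SimpleGraph.Walk.length_edges, hnil]
        rfl
      obtain ⟨f₀, hf₀⟩ := List.exists_mem_of_ne_nil _ hpne
      have hf₀ZM : f₀ ∈ ZM := mem_of_mem_edges hf₀
      refine Finset.sum_pos' (fun f _ => ENNReal.toReal_nonneg) ⟨f₀, hf₀ZM, ?_⟩
      obtain ⟨c, d, rfl⟩ : ∃ c d, f₀ = s(c,d) := by
        induction f₀ using Sym2.ind with | _ x y => exact ⟨x, y, rfl⟩
      have hcd : c ≠ d := by
        intro h
        exact (Finset.mem_filter.mp (hZMsub hf₀ZM)).2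
          (by rw [h]; exact Sym2.mk_isDiag_iff.mpr rfl)
      exact ENNReal.toReal_pos (ne_of_gt (edist_pos' hHpos hcd))
        (edist_lt_top_of_reachable (hHconn.preconnected c d)).ne
    have hl : 0 ≤ l := by
      by_contra hneg
      push_neg at hneg
      have : l * gweight (indw H w) ZM < 0 := mul_neg_of_neg_of_pos hneg hZMpos
      linarith [le_trans hSnn h2]
    calc gweight w H ≤ gweight (indw H w) S := h1
      _ ≤ l * gweight (indw H w) ZM := h2
      _ ≤ l * gweight w Z := mul_le_mul_of_nonneg_left h3 hl

/-- Lightness transfer: let `G` be a weighted graph, `H` its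
greedy `t`-spanner, and suppose the induced metric `M_H` admits a `t`-spanner
of lightness at most `l`. Then `w(H) ≤ l * w(MST(G))`. -/
theorem lightness_transfer (E H : Finset (Sym2 V)) (w : Sym2 V → ℝ) (t l : ℝ)
    (ht : 1 ≤ t) (hw : ∀ e ∈ E, 0 < w e) (hE : E ⊆ completeE V)
    (hconn : (toSG E).Connected) (hH : IsGreedy w t E H)
    (hspan : ∃ S : Finset (Sym2 V), S ⊆ completeE V ∧
      (∀ u v : V, edist S (indw H w) s(u, v) ≤
        ENNReal.ofReal t * edist H w s(u, v)) ∧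
      ∀ ZM, IsMST (indw H w) (completeE V) ZM →
        gweight (indw H w) S ≤ l * gweight (indw H w) ZM) :
    ∀ Z, IsMST w E Z → gweight w H ≤ l * gweight w Z := by
  exact lightness_transfer' E H w t l ht hw hE hconn hH hspan
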